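/- Let F be a field of characteristic ≠ 2 and n ≥ d. Then the canonical algebra homomorphism ψ: S_F(n,d) → End_{S_F(n,d)}(S_F^-(n,d)), defined by ψ(x)(y) = xy where S_F^-(n,d) is viewed as a right S_F(n,d)-module, is an isomorphism of F-algebras. -/

import Mathlib

set_option maxHeartbeats 1000000


noncomputable section

variable (F : Type*) [Field F] (n d : ℕ)

/-- The tensor space `(Fⁿ)^{⊗d}`, realized as `F[I(n,d)]` with `I(n,d) = Fin d → Fin n`. -/
abbrev TensorSpace := (Fin d → Fin n) → F

/-- `S_d`-equivariance of an endomorphism of tensor space. -/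
def SCond (T : Module.End F (TensorSpace F n d)) : Prop :=
  ∀ (w : Equiv.Perm (Fin d)) (f : TensorSpace F n d) (v : Fin d → Fin n),
    T (fun u => f (u ∘ w)) v = T f (v ∘ w)

/-- Sign-twisted `S_d`-equivariance of an endomorphism of tensor space. -/
def MCond (T : Module.End F (TensorSpace F n d)) : Prop :=
  ∀ (w : Equiv.Perm (Fin d)) (f : TensorSpace F n d) (v : Fin d → Fin n),
    T (fun u => f (u ∘ w)) v = ((Equiv.Perm.sign w : ℤ) : F) * T f (v ∘ w)

/-- The Schur algebra `S_F(n,d)` as an `F`-subalgebra of `End((Fⁿ)^{⊗d})`. -/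
def schurAlg : Subalgebra F (Module.End F (TensorSpace F n d)) where
  carrier := {T | SCond F n d T}
  mul_mem' := by
    intro a b ha hb w f v
    rw [Module.End.mul_apply, Module.End.mul_apply]
    have h1 : b (fun u => f (u ∘ w)) = fun u => b f (u ∘ w) := funext (hb w f)
    rw [h1]
    exact ha w (b f) v
  add_mem' := by
    intro a b ha hb w f v
    simp only [LinearMap.add_apply, Pi.add_apply, ha w f v, hb w f v]
  algebraMap_mem' := by
    intro c w f v
    simp [Module.algebraMap_end_apply]

/-- The bimodule `S_F⁻(n,d)` as an `F`-subspace of `End((Fⁿ)^{⊗d})`. -/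
def schurMinusSub : Submodule F (Module.End F (TensorSpace F n d)) where
  carrier := {T | MCond F n d T}
  add_mem' := by
    intro a b ha hb w f v
    simp only [LinearMap.add_apply, Pi.add_apply, ha w f v, hb w f v]
    ring
  zero_mem' := by intro w f v; simp
  smul_mem' := by
    intro c T hT w f v
    simp only [LinearMap.smul_apply, Pi.smul_apply, smul_eq_mul, hT w f v]
    ring

lemma smul_mem_minus (s : schurAlg F n d) (m : schurMinusSub F n d) :
    (s : Module.End F (TensorSpace F n d)) * m ∈ schurMinusSub F n d := by
  intro w f v
  rw [Module.End.mul_apply, Module.End.mul_apply]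
  have h1 : (m : Module.End F (TensorSpace F n d)) (fun u => f (u ∘ w)) =
      ((Equiv.Perm.sign w : ℤ) : F) • fun u =>
        (m : Module.End F (TensorSpace F n d)) f (u ∘ w) := by
    funext u
    simpa using m.2 w f u
  rw [h1, map_smul]
  simp only [Pi.smul_apply, smul_eq_mul]
  rw [s.2 w ((m : Module.End F (TensorSpace F n d)) f) v]

lemma mul_mem_minus (m : schurMinusSub F n d) (s : schurAlg F n d) :
    (m : Module.End F (TensorSpace F n d)) * s ∈ schurMinusSub F n d := by
  intro w f v
  rw [Module.End.mul_apply, Module.End.mul_apply]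
  have h1 : (s : Module.End F (TensorSpace F n d)) (fun u => f (u ∘ w)) =
      fun u => (s : Module.End F (TensorSpace F n d)) f (u ∘ w) := funext (s.2 w f)
  rw [h1]
  exact m.2 w ((s : Module.End F (TensorSpace F n d)) f) v

/-- The right action of `S_F(n,d)` on `S_F⁻(n,d)` (composition in `End_{A_d}`). -/
def rAct (m : schurMinusSub F n d) (s : schurAlg F n d) : schurMinusSub F n d :=
  ⟨(m : Module.End F (TensorSpace F n d)) * s, mul_mem_minus F n d m s⟩

/-- The canonical map `ψ : S_F(n,d) → End_{S_F(n,d)}(S_F⁻(n,d))`, `ψ(x)(y) = xy`, viewed as a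
map into the `F`-linear endomorphisms of `S_F⁻(n,d)` commuting with the right
`S_F(n,d)`-action. -/
def psi (s : schurAlg F n d) :
    {f : Module.End F (schurMinusSub F n d) //
      ∀ (m : schurMinusSub F n d) (s' : schurAlg F n d),
        f (rAct F n d m s') = rAct F n d (f m) s'} :=
  ⟨{ toFun := fun m => ⟨(s : Module.End F (TensorSpace F n d)) * m, smul_mem_minus F n d s m⟩
     map_add' := fun m m' => Subtype.ext (by simp [mul_add])
     map_smul' := fun c m => Subtype.ext (by simp [mul_smul_comm]) },
   fun m s' => Subtype.ext (mul_assoc _ _ _)⟩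


/-! ### Auxiliary material for the proof -/

/-- Sign of a permutation, cast into `F`. -/
def sgnF (w : Equiv.Perm (Fin d)) : F := ((Equiv.Perm.sign w : ℤ) : F)

lemma sgnF_def (w : Equiv.Perm (Fin d)) : ((Equiv.Perm.sign w : ℤ) : F) = sgnF F d w := rfl

lemma sgnF_mul (w w' : Equiv.Perm (Fin d)) : sgnF F d (w * w') = sgnF F d w * sgnF F d w' := by
  simp [sgnF]

lemma sgnF_sq (w : Equiv.Perm (Fin d)) : sgnF F d w * sgnF F d w = 1 := by
  rcases Int.units_eq_one_or (Equiv.Perm.sign w) with h | h <;> simp [sgnF, h]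

lemma sgnF_inv (w : Equiv.Perm (Fin d)) : sgnF F d w⁻¹ = sgnF F d w := by
  simp [sgnF]

lemma sgnF_one : sgnF F d 1 = 1 := by simp [sgnF]

/-- Basis vector of the tensor space. -/
def eb (j : Fin d → Fin n) : TensorSpace F n d := fun v => if v = j then 1 else 0

lemma eb_expand (g : TensorSpace F n d) :
    ∑ j : Fin d → Fin n, g j • eb F n d j = g := by
  funext v
  rw [Finset.sum_apply]
  simp only [Pi.smul_apply, eb, smul_eq_mul, mul_ite, mul_one, mul_zero]
  simp [Finset.sum_ite_eq]

lemma end_ext {ℓ ℓ' : Module.End F (TensorSpace F n d)}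
    (h : ∀ j, ℓ (eb F n d j) = ℓ' (eb F n d j)) : ℓ = ℓ' := by
  apply LinearMap.ext; intro f
  calc ℓ f = ℓ (∑ j : Fin d → Fin n, f j • eb F n d j) := by rw [eb_expand]
    _ = ∑ j : Fin d → Fin n, f j • ℓ (eb F n d j) := by rw [map_sum]; simp only [map_smul]
    _ = ∑ j : Fin d → Fin n, f j • ℓ' (eb F n d j) := by simp only [h]
    _ = ℓ' (∑ j : Fin d → Fin n, f j • eb F n d j) := by rw [map_sum]; simp only [map_smul]
    _ = ℓ' f := by rw [eb_expand]

/-- The standard injective multi-index `i₀`. -/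
def i0 (hnd : d ≤ n) : Fin d → Fin n := Fin.castLE hnd

lemma i0_inj (hnd : d ≤ n) : Function.Injective (i0 n d hnd) :=
  Fin.castLE_injective hnd

lemma i0_comp_eq_one (hnd : d ≤ n) {w : Equiv.Perm (Fin d)}
    (h : i0 n d hnd ∘ ⇑w = i0 n d hnd) : w = 1 := by
  ext t
  have h2 := i0_inj n d hnd (congrFun h t)
  simp [h2]

lemma i0_comp_inj (hnd : d ≤ n) {u u' : Equiv.Perm (Fin d)}
    (h : i0 n d hnd ∘ ⇑u = i0 n d hnd ∘ ⇑u') : u = u' := by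
  ext t
  have h2 := i0_inj n d hnd (congrFun h t)
  simp [h2]

lemma comp_perm_cancel (w : Equiv.Perm (Fin d)) {f g : Fin d → Fin n} :
    f ∘ ⇑w = g ∘ ⇑w ↔ f = g := by
  constructor
  · intro h
    funext t
    have := congrFun h (w⁻¹ t)
    simpa using this
  · rintro rfl; rfl

/-- The `S_d`-equivariant "matrix unit like" endomorphism `ξ_{a,b}`. -/
def xiE (a b : Fin d → Fin n) : Module.End F (TensorSpace F n d) where
  toFun g := fun v => ∑ w : Equiv.Perm (Fin d), if v = a ∘ ⇑w then g (b ∘ ⇑w) else 0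
  map_add' g g' := by
    funext v
    rw [Pi.add_apply, ← Finset.sum_add_distrib]
    refine Finset.sum_congr rfl fun w _ => ?_
    by_cases h : v = a ∘ ⇑w <;> simp [h]
  map_smul' c g := by
    funext v
    simp only [RingHom.id_apply, Pi.smul_apply, smul_eq_mul, Finset.mul_sum]
    refine Finset.sum_congr rfl fun w _ => ?_
    by_cases h : v = a ∘ ⇑w <;> simp [h]

lemma xiE_apply (a b : Fin d → Fin n) (g : TensorSpace F n d) (v : Fin d → Fin n) :
    xiE F n d a b g v = ∑ w : Equiv.Perm (Fin d), if v = a ∘ ⇑w then g (b ∘ ⇑w) else 0 := rfl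

/-- The sign-twisted equivariant map `m^{(f)}` with `m^{(f)}(e_{i₀}) = f`. -/
def mE (hnd : d ≤ n) (f : TensorSpace F n d) : Module.End F (TensorSpace F n d) where
  toFun g := fun v => ∑ w : Equiv.Perm (Fin d),
    sgnF F d w * g (i0 n d hnd ∘ ⇑w) * f (v ∘ ⇑w⁻¹)
  map_add' g g' := by
    funext v
    rw [Pi.add_apply, ← Finset.sum_add_distrib]
    refine Finset.sum_congr rfl fun w _ => ?_
    simp only [Pi.add_apply]
    ring
  map_smul' c g := by
    funext v
    simp only [RingHom.id_apply, Pi.smul_apply, smul_eq_mul, Finset.mul_sum]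
    refine Finset.sum_congr rfl fun w _ => ?_
    ring

lemma mE_apply (hnd : d ≤ n) (f g : TensorSpace F n d) (v : Fin d → Fin n) :
    mE F n d hnd f g v = ∑ w : Equiv.Perm (Fin d),
      sgnF F d w * g (i0 n d hnd ∘ ⇑w) * f (v ∘ ⇑w⁻¹) := rfl

lemma mE_add (hnd : d ≤ n) (f f' : TensorSpace F n d) :
    mE F n d hnd (f + f') = mE F n d hnd f + mE F n d hnd f' := by
  apply LinearMap.ext; intro g; funext v
  rw [LinearMap.add_apply, Pi.add_apply, mE_apply, mE_apply, mE_apply, ← Finset.sum_add_distrib]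
  refine Finset.sum_congr rfl fun w _ => ?_
  simp only [Pi.add_apply]
  ring

lemma mE_smul (hnd : d ≤ n) (c : F) (f : TensorSpace F n d) :
    mE F n d hnd (c • f) = c • mE F n d hnd f := by
  apply LinearMap.ext; intro g; funext v
  rw [LinearMap.smul_apply, Pi.smul_apply, mE_apply, mE_apply, smul_eq_mul, Finset.mul_sum]
  refine Finset.sum_congr rfl fun w _ => ?_
  simp only [Pi.smul_apply, smul_eq_mul]
  ring

lemma eb_i0_comp (hnd : d ≤ n) {w : Equiv.Perm (Fin d)} (hw : w ≠ 1) :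
    eb F n d (i0 n d hnd) (i0 n d hnd ∘ ⇑w) = 0 := by
  have h1 : i0 n d hnd ∘ ⇑w ≠ i0 n d hnd := fun hc => hw (i0_comp_eq_one n d hnd hc)
  simp [eb, h1]

/-- `ξ_{a,i₀} e_{i₀} = e_a`. -/
lemma xiE_eb (hnd : d ≤ n) (a : Fin d → Fin n) :
    xiE F n d a (i0 n d hnd) (eb F n d (i0 n d hnd)) = eb F n d a := by
  funext v
  rw [xiE_apply, Finset.sum_eq_single (1 : Equiv.Perm (Fin d))]
  · simp [eb]
  · intro w _ hw
    rw [eb_i0_comp F n d hnd hw]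
    simp
  · simp

/-- `ξ_{i₀, i₀∘w} e_{i₀} = e_{i₀∘w⁻¹}`. -/
lemma xiE_eb' (hnd : d ≤ n) (w : Equiv.Perm (Fin d)) :
    xiE F n d (i0 n d hnd) (i0 n d hnd ∘ ⇑w) (eb F n d (i0 n d hnd)) =
      eb F n d (i0 n d hnd ∘ ⇑w⁻¹) := by
  funext v
  rw [xiE_apply, Finset.sum_eq_single w⁻¹]
  · have h1 : (i0 n d hnd ∘ ⇑w) ∘ ⇑w⁻¹ = i0 n d hnd := by
      funext t; simp
    rw [h1]
    simp [eb]
  · intro u _ hu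
    have h1 : (i0 n d hnd ∘ ⇑w) ∘ ⇑u ≠ i0 n d hnd := by
      intro hc
      have hwu : w * u = 1 := i0_comp_eq_one n d hnd (by
        rw [Equiv.Perm.coe_mul, ← Function.comp_assoc]; exact hc)
      have hu2 : u = w⁻¹ := by
        have h7 := congrArg (fun z => w⁻¹ * z) hwu
        simpa [← mul_assoc] using h7
      exact hu hu2
    have h2 : eb F n d (i0 n d hnd) ((i0 n d hnd ∘ ⇑w) ∘ ⇑u) = 0 := by simp [eb, h1]
    rw [h2]
    simp
  · simp

/-- `m^{(f)} e_{i₀} = f`. -/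
lemma mE_eb (hnd : d ≤ n) (f : TensorSpace F n d) :
    mE F n d hnd f (eb F n d (i0 n d hnd)) = f := by
  funext v
  rw [mE_apply, Finset.sum_eq_single (1 : Equiv.Perm (Fin d))]
  · simp [eb, sgnF_one]
  · intro w _ hw
    rw [eb_i0_comp F n d hnd hw]
    ring
  · simp

lemma xiE_scond (a b : Fin d → Fin n) : SCond F n d (xiE F n d a b) := by
  intro w f v
  rw [xiE_apply, xiE_apply]
  refine Fintype.sum_equiv (Equiv.mulRight w) _ _ ?_
  intro u
  simp only [Equiv.coe_mulRight]
  have h2 : (v = a ∘ ⇑u) ↔ (v ∘ ⇑w = a ∘ ⇑(u * w)) := by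
    rw [Equiv.Perm.coe_mul, ← Function.comp_assoc]
    exact (comp_perm_cancel n d w).symm
  by_cases h : v = a ∘ ⇑u
  · rw [if_pos h]; refine Eq.trans ?_ (if_pos (h2.mp h)).symm
    show f ((b ∘ ⇑u) ∘ ⇑w) = f (b ∘ ⇑(u * w))
    rw [Equiv.Perm.coe_mul, Function.comp_assoc]
  · rw [if_neg h]; exact (if_neg (fun hc => h (h2.mpr hc))).symm

lemma mE_mcond (hnd : d ≤ n) (f : TensorSpace F n d) : MCond F n d (mE F n d hnd f) := by
  intro w g v
  rw [mE_apply, mE_apply, sgnF_def, Finset.mul_sum]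
  refine Fintype.sum_equiv (Equiv.mulRight w) _ _ ?_
  intro u
  simp only [Equiv.coe_mulRight]
  have hg : i0 n d hnd ∘ ⇑(u * w) = (i0 n d hnd ∘ ⇑u) ∘ ⇑w := by
    rw [Equiv.Perm.coe_mul, Function.comp_assoc]
  have hf : (v ∘ ⇑w) ∘ ⇑(u * w)⁻¹ = v ∘ ⇑u⁻¹ := by
    funext t; simp [mul_inv_rev, Equiv.Perm.coe_mul, Function.comp]
  have hs : sgnF F d w * sgnF F d (u * w) = sgnF F d u := by
    rw [sgnF_mul]
    calc sgnF F d w * (sgnF F d u * sgnF F d w)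
        = sgnF F d u * (sgnF F d w * sgnF F d w) := by ring
      _ = sgnF F d u := by rw [sgnF_sq, mul_one]
  show sgnF F d u * g ((i0 n d hnd ∘ ⇑u) ∘ ⇑w) * f (v ∘ ⇑u⁻¹)
      = sgnF F d w * (sgnF F d (u * w) * g (i0 n d hnd ∘ ⇑(u * w)) * f ((v ∘ ⇑w) ∘ ⇑(u * w)⁻¹))
  rw [hg, hf, ← hs]
  ring

/-- Equivariance consequence: values of any `m ∈ S⁻` on the regular part. -/
lemma mcond_eb (hnd : d ≤ n) {N : Module.End F (TensorSpace F n d)} (hN : MCond F n d N)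
    (u : Equiv.Perm (Fin d)) (v : Fin d → Fin n) :
    N (eb F n d (i0 n d hnd ∘ ⇑u)) v = sgnF F d u * N (eb F n d (i0 n d hnd)) (v ∘ ⇑u⁻¹) := by
  have h1 : (fun t => eb F n d (i0 n d hnd ∘ ⇑u) (t ∘ ⇑u)) = eb F n d (i0 n d hnd) := by
    funext t
    simp only [eb]
    congr 1
    exact propext (comp_perm_cancel n d u)
  have h2 := hN u (eb F n d (i0 n d hnd ∘ ⇑u)) (v ∘ ⇑u⁻¹)
  rw [h1, sgnF_def] at h2
  have h3 : (v ∘ ⇑u⁻¹) ∘ ⇑u = v := by funext t; simp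
  rw [h3] at h2
  have h4 := congrArg (fun z => sgnF F d u * z) h2
  simp only [← mul_assoc, sgnF_sq, one_mul] at h4
  exact h4.symm

/-- If `N ∈ S⁻` kills `e_{i₀}`, it kills the image of the projection `π = ξ_{i₀,i₀}`. -/
lemma ker_pi (hnd : d ≤ n) {N : Module.End F (TensorSpace F n d)} (hN : MCond F n d N)
    (h0 : N (eb F n d (i0 n d hnd)) = 0) :
    N * xiE F n d (i0 n d hnd) (i0 n d hnd) = 0 := by
  apply LinearMap.ext; intro g
  rw [Module.End.mul_apply, LinearMap.zero_apply]
  have hpi : xiE F n d (i0 n d hnd) (i0 n d hnd) g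
      = ∑ u : Equiv.Perm (Fin d), g (i0 n d hnd ∘ ⇑u) • eb F n d (i0 n d hnd ∘ ⇑u) := by
    funext v
    rw [xiE_apply, Finset.sum_apply]
    refine Finset.sum_congr rfl fun u _ => ?_
    by_cases h : v = i0 n d hnd ∘ ⇑u <;> simp [eb, h]
  rw [hpi, map_sum]
  refine Finset.sum_eq_zero fun u _ => ?_
  rw [map_smul]
  have hz : N (eb F n d (i0 n d hnd ∘ ⇑u)) = 0 := by
    funext v
    rw [mcond_eb F n d hnd hN u v, h0]
    simp
  rw [hz]
  simp

/-- Key commutation: `m^{(w·f)} = sgn(w) • m^{(f)} ∘ ξ_{i₀, i₀∘w}`. -/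
lemma mE_rho (hnd : d ≤ n) (w : Equiv.Perm (Fin d)) (f : TensorSpace F n d) :
    mE F n d hnd (fun u => f (u ∘ ⇑w)) =
      sgnF F d w • (mE F n d hnd f * xiE F n d (i0 n d hnd) (i0 n d hnd ∘ ⇑w)) := by
  apply LinearMap.ext; intro g; funext v
  rw [LinearMap.smul_apply, Pi.smul_apply, smul_eq_mul, Module.End.mul_apply, mE_apply,
    mE_apply, Finset.mul_sum]
  have hinner : ∀ u : Equiv.Perm (Fin d),
      xiE F n d (i0 n d hnd) (i0 n d hnd ∘ ⇑w) g (i0 n d hnd ∘ ⇑u) =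
        g ((i0 n d hnd ∘ ⇑w) ∘ ⇑u) := by
    intro u
    rw [xiE_apply, Finset.sum_eq_single u]
    · rw [if_pos rfl]
    · intro u' _ hne
      rw [if_neg (fun hc => hne (i0_comp_inj n d hnd hc).symm)]
    · simp
  refine Fintype.sum_equiv (Equiv.mulLeft w⁻¹) _ _ ?_
  intro u
  simp only [Equiv.coe_mulLeft]
  rw [hinner]
  have hg : (i0 n d hnd ∘ ⇑w) ∘ ⇑(w⁻¹ * u) = i0 n d hnd ∘ ⇑u := by
    funext t; simp [Equiv.Perm.coe_mul, Function.comp]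
  have hf : v ∘ ⇑(w⁻¹ * u)⁻¹ = (v ∘ ⇑u⁻¹) ∘ ⇑w := by
    funext t; simp [mul_inv_rev, Equiv.Perm.coe_mul, Function.comp]
  have hs : sgnF F d w * sgnF F d (w⁻¹ * u) = sgnF F d u := by
    rw [sgnF_mul, sgnF_inv, ← mul_assoc, sgnF_sq, one_mul]
  show sgnF F d u * g (i0 n d hnd ∘ ⇑u) * f ((v ∘ ⇑u⁻¹) ∘ ⇑w)
      = sgnF F d w * (sgnF F d (w⁻¹ * u) * g ((i0 n d hnd ∘ ⇑w) ∘ ⇑(w⁻¹ * u)) * f (v ∘ ⇑(w⁻¹ * u)⁻¹))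
  rw [hg, hf, ← hs]
  ring

lemma mem_minus_of_mcond {T : Module.End F (TensorSpace F n d)} (h : MCond F n d T) :
    T ∈ schurMinusSub F n d := h

lemma mem_alg_of_scond {T : Module.End F (TensorSpace F n d)} (h : SCond F n d T) :
    T ∈ schurAlg F n d := h

/-- The candidate preimage of `φ` under `ψ` (bare function). -/
def xFun (hnd : d ≤ n) (φ : Module.End F (schurMinusSub F n d))
    (f : TensorSpace F n d) : TensorSpace F n d :=
  ((φ ⟨mE F n d hnd f, mE_mcond F n d hnd f⟩ : schurMinusSub F n d) :
      Module.End F (TensorSpace F n d)) (eb F n d (i0 n d hnd))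

lemma xFun_add (hnd : d ≤ n) (φ : Module.End F (schurMinusSub F n d))
    (f f' : TensorSpace F n d) :
    xFun F n d hnd φ (f + f') = xFun F n d hnd φ f + xFun F n d hnd φ f' := by
  unfold xFun
  have h1 : (⟨mE F n d hnd (f + f'), mE_mcond F n d hnd (f + f')⟩ : schurMinusSub F n d)
      = ⟨mE F n d hnd f, mE_mcond F n d hnd f⟩ + ⟨mE F n d hnd f', mE_mcond F n d hnd f'⟩ :=
    Subtype.ext (mE_add F n d hnd f f')
  rw [h1, map_add]
  rfl

lemma xFun_smul (hnd : d ≤ n) (φ : Module.End F (schurMinusSub F n d))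
    (c : F) (f : TensorSpace F n d) :
    xFun F n d hnd φ (c • f) = c • xFun F n d hnd φ f := by
  unfold xFun
  have h1 : (⟨mE F n d hnd (c • f), mE_mcond F n d hnd (c • f)⟩ : schurMinusSub F n d)
      = c • ⟨mE F n d hnd f, mE_mcond F n d hnd f⟩ :=
    Subtype.ext (mE_smul F n d hnd c f)
  rw [h1, map_smul]
  rfl

/-- The candidate preimage of `φ` under `ψ`. -/
def xEnd (hnd : d ≤ n) (φ : Module.End F (schurMinusSub F n d)) :
    Module.End F (TensorSpace F n d) where
  toFun := xFun F n d hnd φ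
  map_add' := xFun_add F n d hnd φ
  map_smul' := xFun_smul F n d hnd φ

lemma xEnd_apply (hnd : d ≤ n) (φ : Module.End F (schurMinusSub F n d))
    (f : TensorSpace F n d) :
    xEnd F n d hnd φ f = ((φ ⟨mE F n d hnd f, mE_mcond F n d hnd f⟩ : schurMinusSub F n d) :
      Module.End F (TensorSpace F n d)) (eb F n d (i0 n d hnd)) := rfl

lemma xEnd_scond (hnd : d ≤ n) (φ : Module.End F (schurMinusSub F n d))
    (hφ : ∀ (m : schurMinusSub F n d) (s' : schurAlg F n d),
      φ (rAct F n d m s') = rAct F n d (φ m) s') :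
    SCond F n d (xEnd F n d hnd φ) := by
  intro w f v
  rw [xEnd_apply, xEnd_apply]
  set mf : schurMinusSub F n d := ⟨mE F n d hnd f, mE_mcond F n d hnd f⟩ with hmf
  set xs : schurAlg F n d :=
    ⟨xiE F n d (i0 n d hnd) (i0 n d hnd ∘ ⇑w),
      mem_alg_of_scond F n d (xiE_scond F n d (i0 n d hnd) (i0 n d hnd ∘ ⇑w))⟩ with hxs
  have h1 : (⟨mE F n d hnd (fun u => f (u ∘ ⇑w)),
      mE_mcond F n d hnd (fun u => f (u ∘ ⇑w))⟩ : schurMinusSub F n d)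
      = sgnF F d w • rAct F n d mf xs :=
    Subtype.ext (mE_rho F n d hnd w f)
  rw [h1, map_smul, hφ mf xs]
  have h2 : ((sgnF F d w • rAct F n d (φ mf) xs : schurMinusSub F n d) :
      Module.End F (TensorSpace F n d)) =
      sgnF F d w • (((φ mf : schurMinusSub F n d) : Module.End F (TensorSpace F n d)) *
        xiE F n d (i0 n d hnd) (i0 n d hnd ∘ ⇑w)) := rfl
  rw [h2]
  rw [LinearMap.smul_apply, Pi.smul_apply, smul_eq_mul, Module.End.mul_apply,
    xiE_eb' F n d hnd w,
    mcond_eb F n d hnd (φ mf).2 w⁻¹ v, sgnF_inv, inv_inv, ← mul_assoc, sgnF_sq, one_mul]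


/-- for `char F ≠ 2` and `n ≥ d`, the canonical algebra homomorphism
`ψ : S_F(n,d) → End_{S_F(n,d)}(S_F⁻(n,d))` is an isomorphism of `F`-algebras: it is
bijective, `F`-linear, multiplicative and unital. -/
theorem stmt_19 (h2 : (2 : F) ≠ 0) (hnd : d ≤ n) :
    Function.Bijective (psi F n d) ∧
    (∀ (c : F) (s s' : schurAlg F n d),
      (psi F n d (c • s + s')).1 = c • (psi F n d s).1 + (psi F n d s').1) ∧
    (∀ s s' : schurAlg F n d, (psi F n d (s * s')).1 = (psi F n d s).1 * (psi F n d s').1) ∧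
    (psi F n d 1).1 = 1 := by
  refine ⟨⟨?_, ?_⟩, ?_, ?_, ?_⟩
  · -- injectivity
    intro s s' h
    apply Subtype.ext
    apply end_ext F n d
    intro j
    have hm : mE F n d hnd (eb F n d j) ∈ schurMinusSub F n d :=
      mem_minus_of_mcond F n d (mE_mcond F n d hnd (eb F n d j))
    have h2 : (s : Module.End F (TensorSpace F n d)) * mE F n d hnd (eb F n d j)
        = (s' : Module.End F (TensorSpace F n d)) * mE F n d hnd (eb F n d j) :=
      congrArg (fun p => ((p.1 ⟨mE F n d hnd (eb F n d j), hm⟩ : schurMinusSub F n d) :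
        Module.End F (TensorSpace F n d))) h
    have h3 := congrArg (fun L : Module.End F (TensorSpace F n d) =>
      L (eb F n d (i0 n d hnd))) h2
    simpa only [Module.End.mul_apply, mE_eb F n d hnd] using h3
  · -- surjectivity
    rintro ⟨φ, hφ⟩
    refine ⟨⟨xEnd F n d hnd φ, mem_alg_of_scond F n d (xEnd_scond F n d hnd φ hφ)⟩, ?_⟩
    apply Subtype.ext
    apply LinearMap.ext
    intro m
    apply Subtype.ext
    -- key step: φ evaluated at eᵢ₀ agrees with xEnd
    have hkey : ∀ m' : schurMinusSub F n d,
        ((φ m' : schurMinusSub F n d) : Module.End F (TensorSpace F n d))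
          (eb F n d (i0 n d hnd))
        = xEnd F n d hnd φ
            ((m' : Module.End F (TensorSpace F n d)) (eb F n d (i0 n d hnd))) := by
      intro m'
      set g : TensorSpace F n d :=
        (m' : Module.End F (TensorSpace F n d)) (eb F n d (i0 n d hnd)) with hg
      set M : schurMinusSub F n d := ⟨mE F n d hnd g, mE_mcond F n d hnd g⟩ with hM
      set ps : schurAlg F n d :=
        ⟨xiE F n d (i0 n d hnd) (i0 n d hnd),
          mem_alg_of_scond F n d (xiE_scond F n d (i0 n d hnd) (i0 n d hnd))⟩ with hps
      have hNmem : MCond F n d ((M - m' : schurMinusSub F n d) :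
          Module.End F (TensorSpace F n d)) := (M - m').2
      have hN0 : ((M - m' : schurMinusSub F n d) : Module.End F (TensorSpace F n d))
          (eb F n d (i0 n d hnd)) = 0 := by
        have : ((M - m' : schurMinusSub F n d) : Module.End F (TensorSpace F n d))
            = mE F n d hnd g - (m' : Module.End F (TensorSpace F n d)) := rfl
        rw [this, LinearMap.sub_apply, mE_eb F n d hnd, ← hg, sub_self]
      have hMpi : rAct F n d M ps = rAct F n d m' ps := by
        apply Subtype.ext
        have h4 := ker_pi F n d hnd hNmem hN0
        have h5 : ((M - m' : schurMinusSub F n d) : Module.End F (TensorSpace F n d))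
            = mE F n d hnd g - (m' : Module.End F (TensorSpace F n d)) := by
          rw [hM]; rfl
        rw [h5] at h4
        have h6 : (mE F n d hnd g - (m' : Module.End F (TensorSpace F n d))) *
            xiE F n d (i0 n d hnd) (i0 n d hnd) = 0 := h4
        rw [sub_mul, sub_eq_zero] at h6
        show (M : Module.End F (TensorSpace F n d)) * (ps : Module.End F (TensorSpace F n d))
            = (m' : Module.End F (TensorSpace F n d)) * (ps : Module.End F (TensorSpace F n d))
        rw [hM, hps]
        exact h6
      have hpieb : xiE F n d (i0 n d hnd) (i0 n d hnd) (eb F n d (i0 n d hnd))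
          = eb F n d (i0 n d hnd) := xiE_eb F n d hnd (i0 n d hnd)
      calc ((φ m' : schurMinusSub F n d) : Module.End F (TensorSpace F n d))
            (eb F n d (i0 n d hnd))
          = ((φ m' : schurMinusSub F n d) : Module.End F (TensorSpace F n d))
            (xiE F n d (i0 n d hnd) (i0 n d hnd) (eb F n d (i0 n d hnd))) := by rw [hpieb]
        _ = ((rAct F n d (φ m') ps : schurMinusSub F n d) :
              Module.End F (TensorSpace F n d)) (eb F n d (i0 n d hnd)) := rfl
        _ = ((φ (rAct F n d m' ps) : schurMinusSub F n d) :
              Module.End F (TensorSpace F n d)) (eb F n d (i0 n d hnd)) := by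
              rw [hφ m' ps]
        _ = ((φ (rAct F n d M ps) : schurMinusSub F n d) :
              Module.End F (TensorSpace F n d)) (eb F n d (i0 n d hnd)) := by rw [hMpi]
        _ = ((rAct F n d (φ M) ps : schurMinusSub F n d) :
              Module.End F (TensorSpace F n d)) (eb F n d (i0 n d hnd)) := by
              rw [hφ M ps]
        _ = ((φ M : schurMinusSub F n d) : Module.End F (TensorSpace F n d))
              (xiE F n d (i0 n d hnd) (i0 n d hnd) (eb F n d (i0 n d hnd))) := rfl
        _ = ((φ M : schurMinusSub F n d) : Module.End F (TensorSpace F n d))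
              (eb F n d (i0 n d hnd)) := by rw [hpieb]
        _ = xEnd F n d hnd φ g := rfl
    -- now conclude on each basis vector
    apply end_ext F n d
    intro j
    set xs : schurAlg F n d :=
      ⟨xiE F n d j (i0 n d hnd),
        mem_alg_of_scond F n d (xiE_scond F n d j (i0 n d hnd))⟩ with hxs
    have hebj : xiE F n d j (i0 n d hnd) (eb F n d (i0 n d hnd)) = eb F n d j :=
      xiE_eb F n d hnd j
    calc (xEnd F n d hnd φ * (m : Module.End F (TensorSpace F n d))) (eb F n d j)
        = xEnd F n d hnd φ
            ((m : Module.End F (TensorSpace F n d)) (eb F n d j)) := rfl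
      _ = xEnd F n d hnd φ
            (((rAct F n d m xs : schurMinusSub F n d) :
              Module.End F (TensorSpace F n d)) (eb F n d (i0 n d hnd))) := by
            rw [← hebj]; rfl
      _ = ((φ (rAct F n d m xs) : schurMinusSub F n d) :
            Module.End F (TensorSpace F n d)) (eb F n d (i0 n d hnd)) :=
            (hkey (rAct F n d m xs)).symm
      _ = ((rAct F n d (φ m) xs : schurMinusSub F n d) :
            Module.End F (TensorSpace F n d)) (eb F n d (i0 n d hnd)) := by
            rw [hφ m xs]
      _ = ((φ m : schurMinusSub F n d) : Module.End F (TensorSpace F n d))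
            (xiE F n d j (i0 n d hnd) (eb F n d (i0 n d hnd))) := rfl
      _ = ((φ m : schurMinusSub F n d) : Module.End F (TensorSpace F n d))
            (eb F n d j) := by rw [hebj]
  · -- linearity
    intro c s s'
    apply LinearMap.ext; intro m
    apply Subtype.ext
    show (c • (s : Module.End F (TensorSpace F n d)) +
        (s' : Module.End F (TensorSpace F n d))) * (m : Module.End F (TensorSpace F n d))
      = c • ((s : Module.End F (TensorSpace F n d)) * (m : Module.End F (TensorSpace F n d))) +
        (s' : Module.End F (TensorSpace F n d)) * (m : Module.End F (TensorSpace F n d))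
    rw [add_mul, smul_mul_assoc]
  · -- multiplicativity
    intro s s'
    apply LinearMap.ext; intro m
    apply Subtype.ext
    exact mul_assoc _ _ _
  · -- unitality
    apply LinearMap.ext; intro m
    apply Subtype.ext
    exact one_mul _

end
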